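/- Suppose H(θ) > θ·h_m + (p' ∫₀¹ D(u)^{p'−1} g(u) du)^{1/p'} and h_m = h(0). Then the traveling-wave problem with speed c has no solution for any c ∈ ℝ. -/

import Mathlib

open Set MeasureTheory Filter

/-- The conjugate exponent `p' = p/(p-1)`. -/
noncomputable def pconj (p : ℝ) : ℝ := p / (p - 1)

/-- The constant `k(p)` from the paper. -/
noncomputable def kfun (p : ℝ) : ℝ :=
  if p < 2 then 1 / (2 ^ (pconj p - 1) - 1)
  else if p = 2 then 1
  else pconj p / (pconj p - 1 +
    (1 + pconj p * (pconj p - 1) ^ ((1 : ℝ) / (pconj p - 2)) +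
      (pconj p - 1) ^ (pconj p / (pconj p - 2))) /
    (1 + (pconj p - 1) ^ ((1 : ℝ) / (pconj p - 2))) ^ pconj p)

/-- Standing assumptions on the data `p, θ, D, H, h, g` (combustion setting). -/
structure CombSetup (p θ : ℝ) (D H h g : ℝ → ℝ) : Prop where
  hp : 1 < p
  hθ0 : 0 < θ
  hθ1 : θ < 1
  hD : ContDiffOn ℝ 1 D (Ioo 0 1)
  hDpos : ∀ v ∈ Ioo (0 : ℝ) 1, 0 < D v
  hH : ContDiffOn ℝ 1 H (Icc 0 1)
  hH0 : H 0 = 0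
  hh : ContinuousOn h (Icc 0 1)
  hHd : ∀ v ∈ Icc (0 : ℝ) 1, HasDerivWithinAt H (h v) (Icc 0 1) v
  hgc : ContinuousOn g (Icc 0 1)
  hg0 : ∀ v ∈ Icc (0 : ℝ) θ, g v = 0
  hgpos : ∀ v ∈ Ioo θ 1, 0 < g v
  hg1 : g 1 = 0
  hInt : IntegrableOn (fun v => D v ^ (pconj p - 1) * g v) (Ioo 0 1)

/-- The diffusive flux `ξ ↦ D(u(ξ)) |u'(ξ)|^{p-2} u'(ξ)`. -/
noncomputable def flux (p : ℝ) (D u : ℝ → ℝ) : ℝ → ℝ :=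
  fun ξ => D (u ξ) * (|deriv u ξ| ^ (p - 2) * deriv u ξ)

/-- Solution of the traveling-wave problem with speed `c`. -/
structure IsTWSol (p c : ℝ) (D h g : ℝ → ℝ) (u : ℝ → ℝ) : Prop where
  cont : Continuous u
  mem : ∀ ξ, u ξ ∈ Icc (0 : ℝ) 1
  smooth : ContDiffOn ℝ 1 u {ξ | u ξ ∈ Ioo (0 : ℝ) 1}
  eqn : ∀ ξ ∈ {ξ | u ξ ∈ Ioo (0 : ℝ) 1},
    HasDerivAt (flux p D u) (-(c + h (u ξ)) * deriv u ξ - g (u ξ)) ξ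
  flux_cont : Continuous (fun ξ => if u ξ ∈ Ioo (0 : ℝ) 1 then flux p D u ξ else 0)
  flux_to0 : ∀ ε > 0, ∃ δ > 0, ∀ ξ, u ξ ∈ Ioo (0 : ℝ) 1 → u ξ < δ → |flux p D u ξ| < ε
  flux_to1 : ∀ ε > 0, ∃ δ > 0, ∀ ξ, u ξ ∈ Ioo (0 : ℝ) 1 → 1 - δ < u ξ → |flux p D u ξ| < ε
  lim_bot : Tendsto u atBot (nhds 1)
  lim_top : Tendsto u atTop (nhds 0)

/-- Positive solution of the first-order problem with parameter `c`. -/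
structure IsFOSol (p c : ℝ) (D h g : ℝ → ℝ) (y : ℝ → ℝ) : Prop where
  cont : ContinuousOn y (Icc 0 1)
  eqn : ∀ v ∈ Ioo (0 : ℝ) 1, HasDerivAt y
    (pconj p * ((c + h v) * (max (y v) 0) ^ (1 / p) - D v ^ (pconj p - 1) * g v)) v
  y0 : y 0 = 0
  y1 : y 1 = 0
  pos : ∀ v ∈ Ioo (0 : ℝ) 1, 0 < y v

lemma pconj_gt_one {p : ℝ} (hp : 1 < p) : 1 < pconj p := by
  rw [pconj, lt_div_iff₀ (by linarith)]; linarith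

lemma pconj_eq {p : ℝ} (hp : 1 < p) : (p - 1) * (pconj p - 1) = 1 := by
  have : p - 1 ≠ 0 := by linarith
  rw [pconj]; field_simp; ring

/-- Key algebraic identity for the flux power. -/
lemma flux_pow_identity {p d s : ℝ} (hp : 1 < p) (hd : 0 < d) :
    |d * (|s| ^ (p - 2) * s)| ^ (pconj p - 2) * (d * (|s| ^ (p - 2) * s))
      = d ^ (pconj p - 1) * s := by
  set q := pconj p with hqdef
  rcases eq_or_ne s 0 with rfl | hs
  · simp
  · have hat : (0:ℝ) < |s| := abs_pos.mpr hs
    have h1 : |d * (|s| ^ (p - 2) * s)| = d * |s| ^ (p - 1) := by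
      rw [abs_mul, abs_mul, abs_of_pos hd,
        abs_of_nonneg (Real.rpow_nonneg (abs_nonneg s) _)]
      rw [show p - 1 = (p - 2) + 1 by ring, Real.rpow_add_one hat.ne']
    rw [h1]
    have h2 : (d * |s| ^ (p - 1)) ^ (q - 2)
        = d ^ (q - 2) * |s| ^ ((p - 1) * (q - 2)) := by
      rw [Real.mul_rpow hd.le (Real.rpow_nonneg (abs_nonneg s) _),
        ← Real.rpow_mul (abs_nonneg s)]
    rw [h2]
    have hpq : (p - 1) * (q - 1) = 1 := pconj_eq hp
    have hexp : (p - 1) * (q - 2) + (p - 2) = 0 := by nlinarith [hpq]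
    have h3 : d ^ (q - 2) * d = d ^ (q - 1) := by
      rw [show q - 1 = (q - 2) + 1 by ring, Real.rpow_add_one hd.ne']
    have h4 : |s| ^ ((p - 1) * (q - 2)) * |s| ^ (p - 2) = 1 := by
      rw [← Real.rpow_add hat, hexp, Real.rpow_zero]
    calc d ^ (q - 2) * |s| ^ ((p - 1) * (q - 2)) * (d * (|s| ^ (p - 2) * s))
        = (d ^ (q - 2) * d) * ((|s| ^ ((p - 1) * (q - 2)) * |s| ^ (p - 2)) * s) := by ring
      _ = d ^ (q - 1) * s := by rw [h3, h4, one_mul]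

/-- A function continuous on `[a,b]` with zero derivative inside is constant. -/
lemma eq_of_hasDerivAt_zero {f : ℝ → ℝ} {a b : ℝ} (hab : a ≤ b)
    (hc : ContinuousOn f (Icc a b)) (hd : ∀ x ∈ Ioo a b, HasDerivAt f 0 x) :
    f b = f a := by
  have hdiff : DifferentiableOn ℝ f (interior (Icc a b)) := by
    rw [interior_Icc]
    exact fun x hx => ((hd x hx).differentiableAt).differentiableWithinAt
  have hderiv0 : ∀ x ∈ interior (Icc a b), deriv f x = 0 := by
    rw [interior_Icc]; exact fun x hx => (hd x hx).deriv
  have hanti : AntitoneOn f (Icc a b) :=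
    antitoneOn_of_deriv_nonpos (convex_Icc a b) hc hdiff
      (fun x hx => le_of_eq (hderiv0 x hx))
  have hmono : MonotoneOn f (Icc a b) :=
    monotoneOn_of_deriv_nonneg (convex_Icc a b) hc hdiff
      (fun x hx => ge_of_eq (hderiv0 x hx))
  exact le_antisymm (hanti (left_mem_Icc.mpr hab) (right_mem_Icc.mpr hab) hab)
    (hmono (left_mem_Icc.mpr hab) (right_mem_Icc.mpr hab) hab)

section TW

variable {p θ c : ℝ} {D H h g u : ℝ → ℝ}

/-- Extended flux tends to 0 at `+∞`. -/
lemma Ftop (T : IsTWSol p c D h g u) :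
    Tendsto (fun ξ => if u ξ ∈ Ioo (0:ℝ) 1 then flux p D u ξ else 0) atTop (nhds 0) := by
  rw [NormedAddCommGroup.tendsto_nhds_zero]
  intro ε hε
  obtain ⟨δ, hδ, hflux⟩ := T.flux_to0 ε hε
  filter_upwards [T.lim_top.eventually_lt_const hδ] with ξ hξ
  by_cases hc : u ξ ∈ Ioo (0:ℝ) 1
  · rw [if_pos hc, Real.norm_eq_abs]; exact hflux ξ hc hξ
  · rw [if_neg hc]; simpa using hε

/-- Extended flux tends to 0 at `-∞`. -/
lemma Fbot (T : IsTWSol p c D h g u) :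
    Tendsto (fun ξ => if u ξ ∈ Ioo (0:ℝ) 1 then flux p D u ξ else 0) atBot (nhds 0) := by
  rw [NormedAddCommGroup.tendsto_nhds_zero]
  intro ε hε
  obtain ⟨δ, hδ, hflux⟩ := T.flux_to1 ε hε
  filter_upwards [T.lim_bot.eventually_const_lt (show (1:ℝ) - δ < 1 by linarith)] with ξ hξ
  by_cases hc : u ξ ∈ Ioo (0:ℝ) 1
  · rw [if_pos hc, Real.norm_eq_abs]; exact hflux ξ hc hξ
  · rw [if_neg hc]; simpa using hε

lemma Sopen (T : IsTWSol p c D h g u) : IsOpen {ξ | u ξ ∈ Ioo (0:ℝ) 1} :=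
  isOpen_Ioo.preimage T.cont

lemma hasDerivAt_u (T : IsTWSol p c D h g u) {ξ : ℝ} (hξ : u ξ ∈ Ioo (0:ℝ) 1) :
    HasDerivAt u (deriv u ξ) ξ :=
  (((T.smooth.differentiableOn one_ne_zero).differentiableAt
    ((Sopen T).mem_nhds hξ)).hasDerivAt)

lemma crossing (S : CombSetup p θ D H h g) (T : IsTWSol p c D h g u)
    {v : ℝ} (hv0 : 0 < v) (hvθ : v ≤ θ) :
    ∃ α, u α = v ∧
      (if u α ∈ Ioo (0:ℝ) 1 then flux p D u α else 0) = -(c * v + H v) ∧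
      0 ≤ c * v + H v := by
  have hv1 : v < 1 := lt_of_le_of_lt hvθ S.hθ1
  set A := {ξ : ℝ | v ≤ u ξ} with hAdef
  have hA_closed : IsClosed A := isClosed_le continuous_const T.cont
  have hA_ne : A.Nonempty := by
    obtain ⟨ξ, hξ⟩ := (T.lim_bot.eventually_const_lt hv1).exists
    exact ⟨ξ, hξ.le⟩
  have hA_bdd : BddAbove A := by
    obtain ⟨B, hB⟩ := eventually_atTop.mp (T.lim_top.eventually_lt_const hv0)
    refine BddAbove.mono (fun ξ hξ => ?_) (bddAbove_Iio (a := B))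
    by_contra hc
    rw [Set.mem_Iio] at hc
    exact absurd (hB ξ (not_lt.mp hc)) (not_lt.mpr hξ)
  set α := sSup A with hαdef
  have hαA : v ≤ u α := hA_closed.csSup_mem hA_ne hA_bdd
  have hlt : ∀ ξ, α < ξ → u ξ < v := by
    intro ξ hξ
    by_contra hc
    push_neg at hc
    exact absurd (le_csSup hA_bdd hc) (not_le.mpr hξ)
  have huα : u α = v := by
    refine le_antisymm ?_ hαA
    have ht : Tendsto u (nhdsWithin α (Ioi α)) (nhds (u α)) :=
      (T.cont.tendsto α).mono_left nhdsWithin_le_nhds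
    refine le_of_tendsto ht ?_
    filter_upwards [self_mem_nhdsWithin] with ξ hξ
    exact (hlt ξ hξ).le
  have hS : u α ∈ Ioo (0:ℝ) 1 := by rw [huα]; exact ⟨hv0, hv1⟩
  -- derivative nonpositive at α
  have hu' := hasDerivAt_u T hS
  have hslope : Tendsto (slope u α) (nhdsWithin α (Ioi α)) (nhds (deriv u α)) :=
    (hasDerivAt_iff_tendsto_slope.mp hu').mono_left
      (nhdsWithin_mono α (fun x hx => Set.mem_compl_singleton_iff.mpr (ne_of_gt hx)))
  have hderiv_le : deriv u α ≤ 0 := by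
    refine le_of_tendsto hslope ?_
    filter_upwards [self_mem_nhdsWithin] with ξ hξ
    rw [slope_def_field]
    have h1 : u ξ - u α ≤ 0 := by
      rw [huα]; exact sub_nonpos.mpr (hlt ξ hξ).le
    exact div_nonpos_of_nonpos_of_nonneg h1 (sub_nonneg.mpr (le_of_lt hξ))
  have hfluxle : flux p D u α ≤ 0 := by
    have h2 : |deriv u α| ^ (p-2) * deriv u α ≤ 0 :=
      mul_nonpos_of_nonneg_of_nonpos (Real.rpow_nonneg (abs_nonneg _) _) hderiv_le
    exact mul_nonpos_of_nonneg_of_nonpos (S.hDpos (u α) hS).le h2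
  -- the conserved quantity G
  set G : ℝ → ℝ := fun ξ =>
    (if u ξ ∈ Ioo (0:ℝ) 1 then flux p D u ξ else 0) + c * u ξ + H (u ξ) with hGdef
  have hGcont : Continuous G :=
    (T.flux_cont.add (continuous_const.mul T.cont)).add
      (S.hH.continuousOn.comp_continuous T.cont T.mem)
  have hGderiv : ∀ ξ, u ξ ∈ Ioo (0:ℝ) 1 → u ξ < v → HasDerivAt G 0 ξ := by
    intro ξ hξS hξv
    have hu'' := hasDerivAt_u T hξS
    have hfluxG : HasDerivAt (fun ξ => if u ξ ∈ Ioo (0:ℝ) 1 then flux p D u ξ else 0)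
        (-(c + h (u ξ)) * deriv u ξ - g (u ξ)) ξ := by
      refine (T.eqn ξ hξS).congr_of_eventuallyEq ?_
      filter_upwards [(Sopen T).mem_nhds hξS] with x hx
      exact if_pos hx
    have hH' : HasDerivAt (fun ξ => H (u ξ)) (h (u ξ) * deriv u ξ) ξ := by
      have := HasDerivWithinAt.comp ξ (S.hHd (u ξ) (T.mem ξ))
        (hu''.hasDerivWithinAt (s := univ)) (fun x _ => T.mem x)
      exact hasDerivWithinAt_univ.mp this
    have hgz : g (u ξ) = 0 :=
      S.hg0 (u ξ) ⟨(T.mem ξ).1, le_of_lt (lt_of_lt_of_le hξv hvθ)⟩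
    have hsum := (hfluxG.add (hu''.const_mul c)).add hH'
    refine hsum.congr_deriv ?_
    rw [hgz]; ring
  -- two cases according to whether u vanishes to the right of α
  set Z := {ξ : ℝ | α ≤ ξ ∧ u ξ ≤ 0} with hZdef
  have hZclosed : IsClosed Z := by
    have : Z = Ici α ∩ {ξ | u ξ ≤ 0} := rfl
    rw [this]
    exact IsClosed.inter isClosed_Ici (isClosed_le T.cont continuous_const)
  have hGα : G α = 0 := by
    rcases eq_empty_or_nonempty Z with hZe | hZne
    · have hKonst : ∀ x, α ≤ x → G x = G α := by
        intro x hx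
        refine eq_of_hasDerivAt_zero hx hGcont.continuousOn ?_
        intro ξ hξ
        have h1 : u ξ < v := hlt ξ hξ.1
        have h2 : 0 < u ξ := by
          by_contra hc
          push_neg at hc
          have : ξ ∈ Z := ⟨hξ.1.le, hc⟩
          rw [hZe] at this
          exact absurd this (Set.notMem_empty ξ)
        exact hGderiv ξ ⟨h2, lt_trans h1 hv1⟩ h1
      have hGtop : Tendsto G atTop (nhds 0) := by
        have h1 : Tendsto (fun ξ => c * u ξ) atTop (nhds 0) := by
          have := T.lim_top.const_mul c
          simpa using this
        have h2 : Tendsto (fun ξ => H (u ξ)) atTop (nhds 0) := by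
          have hcw : Tendsto H (nhdsWithin 0 (Icc 0 1)) (nhds (H 0)) :=
            S.hH.continuousOn 0 (left_mem_Icc.mpr zero_le_one)
          have hu0 : Tendsto u atTop (nhdsWithin 0 (Icc 0 1)) :=
            tendsto_nhdsWithin_iff.mpr ⟨T.lim_top, Eventually.of_forall T.mem⟩
          rw [← S.hH0]
          exact hcw.comp hu0
        have := ((Ftop T).add h1).add h2
        simpa [hGdef] using this
      have hGtop' : Tendsto G atTop (nhds (G α)) := by
        refine Tendsto.congr' ?_ tendsto_const_nhds
        filter_upwards [eventually_ge_atTop α] with x hx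
        exact (hKonst x hx).symm
      exact (tendsto_nhds_unique hGtop' hGtop) ▸ rfl
    · have hbdd : BddBelow Z := ⟨α, fun ξ hξ => hξ.1⟩
      set b := sInf Z with hbdef
      have hbZ : b ∈ Z := hZclosed.csInf_mem hZne hbdd
      have hub : u b = 0 := le_antisymm hbZ.2 (T.mem b).1
      have hαb : α < b := by
        rcases lt_or_eq_of_le hbZ.1 with hlt' | heq
        · exact hlt'
        · exfalso
          rw [← heq, huα] at hub
          exact hv0.ne' hub
      have hGb : G b = G α := by
        refine eq_of_hasDerivAt_zero hαb.le hGcont.continuousOn ?_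
        intro ξ hξ
        have h1 : u ξ < v := hlt ξ hξ.1
        have h2 : 0 < u ξ := by
          by_contra hc
          push_neg at hc
          exact absurd (csInf_le hbdd ⟨hξ.1.le, hc⟩) (not_le.mpr hξ.2)
        exact hGderiv ξ ⟨h2, lt_trans h1 hv1⟩ h1
      have : G b = 0 := by
        rw [hGdef]
        simp only [hub]
        rw [if_neg (by simp), S.hH0]
        ring
      rw [← hGb, this]
  -- conclude
  have hite : (if u α ∈ Ioo (0:ℝ) 1 then flux p D u α else 0) = flux p D u α := if_pos hS
  have h0 : (if u α ∈ Ioo (0:ℝ) 1 then flux p D u α else 0) + c * u α + H (u α) = 0 := hGα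
  rw [hite, huα] at h0
  refine ⟨α, huα, ?_, ?_⟩
  · rw [hite]; linarith
  · linarith [hfluxle]

lemma stepA (S : CombSetup p θ D H h g) (T : IsTWSol p c D h g u) : 0 ≤ c + h 0 := by
  have key : ∀ v ∈ Ioc (0:ℝ) θ, 0 ≤ c * v + H v := by
    intro v hv
    obtain ⟨α, _, _, hpos⟩ := crossing S T hv.1 hv.2
    exact hpos
  have hslope : Tendsto (slope H 0) (nhdsWithin 0 (Icc 0 1 \ {0})) (nhds (h 0)) :=
    hasDerivWithinAt_iff_tendsto_slope.mp (S.hHd 0 (left_mem_Icc.mpr zero_le_one))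
  have hmono : nhdsWithin (0:ℝ) (Ioc 0 θ) ≤ nhdsWithin 0 (Icc 0 1 \ {0}) := by
    apply nhdsWithin_mono
    intro x hx
    exact ⟨⟨hx.1.le, le_trans hx.2 S.hθ1.le⟩, by simp [ne_of_gt hx.1]⟩
  have hne : (nhdsWithin (0:ℝ) (Ioc 0 θ)).NeBot := by
    apply mem_closure_iff_nhdsWithin_neBot.mp
    rw [closure_Ioc (ne_of_gt S.hθ0).symm]
    exact left_mem_Icc.mpr S.hθ0.le
  have ht : Tendsto (fun v => c + slope H 0 v) (nhdsWithin 0 (Ioc 0 θ))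
      (nhds (c + h 0)) := tendsto_const_nhds.add (hslope.mono_left hmono)
  refine ge_of_tendsto ht ?_
  filter_upwards [self_mem_nhdsWithin] with v hv
  have h1 := key v hv
  rw [slope_def_field, S.hH0, sub_zero, sub_zero]
  have hvpos : (0:ℝ) < v := hv.1
  have : c + H v / v = (c * v + H v) / v := by field_simp
  rw [this]
  exact div_nonneg h1 hvpos.le

lemma stepC (S : CombSetup p θ D H h g) (T : IsTWSol p c D h g u)
    (hch : ∀ w ∈ Icc (0:ℝ) 1, 0 ≤ c + h w) {α : ℝ} (huα : u α = θ) :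
    |if u α ∈ Ioo (0:ℝ) 1 then flux p D u α else 0| ^ (pconj p)
      ≤ pconj p * ∫ v in Ioo (0:ℝ) 1, D v ^ (pconj p - 1) * g v := by
  set q := pconj p with hqdef
  have hq1 : 1 < q := pconj_gt_one S.hp
  have hq0 : 0 ≤ q := by linarith
  set f : ℝ → ℝ := fun t => D t ^ (q - 1) * g t with hfdef
  set Γ : ℝ → ℝ := fun x => ∫ t in (0:ℝ)..x, f t with hΓdef
  set F : ℝ → ℝ := fun ξ => if u ξ ∈ Ioo (0:ℝ) 1 then flux p D u ξ else 0 with hFdef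
  set M : ℝ → ℝ := fun ξ => |F ξ| ^ q + q * Γ (u ξ) with hMdef
  have hgnn : ∀ t ∈ Icc (0:ℝ) 1, 0 ≤ g t := by
    intro t ht
    rcases le_or_gt t θ with h' | h'
    · rw [S.hg0 t ⟨ht.1, h'⟩]
    · rcases lt_or_eq_of_le ht.2 with h'' | h''
      · exact (S.hgpos t ⟨h', h''⟩).le
      · rw [h'', S.hg1]
  have hIcc : IntegrableOn f (Icc 0 1) :=
    (integrableOn_Icc_iff_integrableOn_Ioo).mpr S.hInt
  have hfcont : ContinuousOn f (Ioo 0 1) := by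
    apply ContinuousOn.mul
    · exact S.hD.continuousOn.rpow_const (fun t _ => Or.inr (by linarith))
    · exact S.hgc.mono Ioo_subset_Icc_self
  have hΓderiv : ∀ w ∈ Ioo (0:ℝ) 1, HasDerivAt Γ (f w) w := by
    intro w hw
    apply intervalIntegral.integral_hasDerivAt_right
    · rw [intervalIntegrable_iff_integrableOn_Ioc_of_le hw.1.le]
      exact hIcc.mono_set (fun t ht => ⟨ht.1.le, le_trans ht.2 hw.2.le⟩)
    · exact ContinuousOn.stronglyMeasurableAtFilter isOpen_Ioo hfcont w hw
    · exact hfcont.continuousAt (isOpen_Ioo.mem_nhds hw)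
  have hΓcont : ContinuousOn Γ (Icc 0 1) := by
    have := intervalIntegral.continuousOn_primitive_interval (a := (0:ℝ)) (b := 1)
      (μ := volume) (f := f) (by rw [uIcc_of_le zero_le_one]; exact hIcc)
    rwa [uIcc_of_le zero_le_one] at this
  have hI : Γ 1 = ∫ v in Ioo (0:ℝ) 1, f v := by
    rw [hΓdef]
    simp only
    rw [intervalIntegral.integral_of_le zero_le_one, integral_Ioc_eq_integral_Ioo]
  have hInn : 0 ≤ ∫ v in Ioo (0:ℝ) 1, f v := by
    apply setIntegral_nonneg measurableSet_Ioo
    intro t ht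
    exact mul_nonneg (Real.rpow_nonneg (S.hDpos t ht).le _)
      (hgnn t ⟨ht.1.le, ht.2.le⟩)
  have hΓθ : Γ θ = 0 := by
    rw [hΓdef]
    simp only
    have : EqOn f (fun _ => (0:ℝ)) (uIcc 0 θ) := by
      intro t ht
      rw [uIcc_of_le S.hθ0.le] at ht
      show D t ^ (q-1) * g t = 0
      rw [S.hg0 t ht, mul_zero]
    rw [intervalIntegral.integral_congr this]
    simp
  have hφcont : Continuous (fun x : ℝ => |x| ^ q) :=
    continuous_abs.rpow_const (fun x => Or.inr hq0)
  have hMcont : Continuous M := by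
    apply Continuous.add
    · exact hφcont.comp T.flux_cont
    · exact continuous_const.mul (hΓcont.comp_continuous T.cont T.mem)
  have hMbot : Tendsto M atBot (nhds (q * ∫ v in Ioo (0:ℝ) 1, f v)) := by
    have h1 : Tendsto (fun ξ => |F ξ| ^ q) atBot (nhds 0) := by
      have := (hφcont.continuousAt (x := 0)).tendsto.comp (Fbot T)
      simpa [hFdef, Function.comp_def, abs_zero, Real.zero_rpow (by linarith : q ≠ 0)] using this
    have h2 : Tendsto (fun ξ => q * Γ (u ξ)) atBot (nhds (q * Γ 1)) := by
      have hΓ1 : Tendsto Γ (nhdsWithin 1 (Icc 0 1)) (nhds (Γ 1)) :=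
        hΓcont 1 (right_mem_Icc.mpr zero_le_one)
      have hu1 : Tendsto u atBot (nhdsWithin 1 (Icc 0 1)) :=
        tendsto_nhdsWithin_iff.mpr ⟨T.lim_bot, Eventually.of_forall T.mem⟩
      exact (hΓ1.comp hu1).const_mul q
    have := h1.add h2
    rw [← hI]
    simpa using this
  have hMderiv : ∀ ξ, u ξ ∈ Ioo (0:ℝ) 1 →
      HasDerivAt M (-(q * (c + h (u ξ)) * D (u ξ) ^ (q-1) * (deriv u ξ)^2)) ξ := by
    intro ξ hξS
    have hu'' := hasDerivAt_u T hξS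
    have hFd : HasDerivAt F (-(c + h (u ξ)) * deriv u ξ - g (u ξ)) ξ := by
      refine (T.eqn ξ hξS).congr_of_eventuallyEq ?_
      filter_upwards [(Sopen T).mem_nhds hξS] with x hx
      exact if_pos hx
    have hφ := hasDerivAt_abs_rpow (F ξ) hq1
    have hcomp := HasDerivAt.comp ξ hφ hFd
    have hid : |F ξ| ^ (q - 2) * F ξ = D (u ξ) ^ (q - 1) * deriv u ξ := by
      have hFval : F ξ = D (u ξ) * (|deriv u ξ| ^ (p - 2) * deriv u ξ) := by
        rw [hFdef]; simp only [if_pos hξS]; rfl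
      rw [hFval, hqdef]
      exact flux_pow_identity S.hp (S.hDpos (u ξ) hξS)
    have hΓu : HasDerivAt (fun ξ => Γ (u ξ)) (f (u ξ) * deriv u ξ) ξ :=
      HasDerivAt.comp ξ (hΓderiv (u ξ) hξS) hu''
    have htot := hcomp.add (hΓu.const_mul q)
    refine htot.congr_deriv ?_
    have h2 : q * |F ξ| ^ (q - 2) * F ξ = q * (D (u ξ) ^ (q - 1) * deriv u ξ) := by
      rw [mul_assoc, hid]
    rw [h2, hfdef]
    ring
  have hAnti : ∀ x, x ≤ α → (∀ ξ ∈ Ioo x α, u ξ ∈ Ioo (0:ℝ) 1) → M α ≤ M x := by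
    intro x hx hint
    have hder : ∀ ξ ∈ interior (Icc x α), deriv M ξ ≤ 0 := by
      rw [interior_Icc]
      intro ξ hξ
      rw [(hMderiv ξ (hint ξ hξ)).deriv]
      have : 0 ≤ q * (c + h (u ξ)) * D (u ξ) ^ (q-1) * (deriv u ξ)^2 := by
        apply mul_nonneg
        apply mul_nonneg
        apply mul_nonneg hq0 (hch (u ξ) (T.mem ξ))
        · exact Real.rpow_nonneg (S.hDpos (u ξ) (hint ξ hξ)).le _
        · exact sq_nonneg _
      linarith
    have hdiff : DifferentiableOn ℝ M (interior (Icc x α)) := by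
      rw [interior_Icc]
      exact fun ξ hξ => ((hMderiv ξ (hint ξ hξ)).differentiableAt).differentiableWithinAt
    have := antitoneOn_of_deriv_nonpos (convex_Icc x α) hMcont.continuousOn hdiff hder
    exact this (left_mem_Icc.mpr hx) (right_mem_Icc.mpr hx) hx
  have hSα : u α ∈ Ioo (0:ℝ) 1 := by rw [huα]; exact ⟨S.hθ0, S.hθ1⟩
  have hMα : M α ≤ q * ∫ v in Ioo (0:ℝ) 1, f v := by
    set N := {ξ : ℝ | ξ ≤ α ∧ u ξ ∉ Ioo (0:ℝ) 1} with hNdef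
    have hNclosed : IsClosed N := by
      have : N = Iic α ∩ {ξ | u ξ ∈ Ioo (0:ℝ) 1}ᶜ := rfl
      rw [this]
      exact IsClosed.inter isClosed_Iic (Sopen T).isClosed_compl
    rcases eq_empty_or_nonempty N with hNe | hNne
    · refine ge_of_tendsto hMbot ?_
      filter_upwards [eventually_le_atBot α] with x hx
      refine hAnti x hx ?_
      intro ξ hξ
      by_contra hc
      have : ξ ∈ N := ⟨hξ.2.le, hc⟩
      rw [hNe] at this
      exact absurd this (Set.notMem_empty ξ)
    · have hNbdd : BddAbove N := ⟨α, fun ξ hξ => hξ.1⟩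
      set a₁ := sSup N with ha₁def
      have ha₁N : a₁ ∈ N := hNclosed.csSup_mem hNne hNbdd
      have ha₁α : a₁ < α := by
        rcases lt_or_eq_of_le ha₁N.1 with h' | h'
        · exact h'
        · exact absurd (h' ▸ hSα) ha₁N.2
      have hMa₁ : M α ≤ M a₁ := by
        refine hAnti a₁ ha₁α.le ?_
        intro ξ hξ
        by_contra hc
        exact absurd (le_csSup hNbdd ⟨hξ.2.le, hc⟩) (not_le.mpr hξ.1)
      have hFa₁ : F a₁ = 0 := if_neg ha₁N.2
      have hval : M a₁ = q * Γ (u a₁) := by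
        rw [hMdef]
        simp only [hFa₁, abs_zero, Real.zero_rpow (by linarith : q ≠ 0), zero_add]
      rcases (T.mem a₁).1.lt_or_eq with h0 | h0
      · -- u a₁ > 0, so u a₁ = 1
        have h1 : u a₁ = 1 := by
          rcases (T.mem a₁).2.lt_or_eq with h1' | h1'
          · exact absurd ⟨h0, h1'⟩ ha₁N.2
          · exact h1'
        calc M α ≤ M a₁ := hMa₁
          _ = q * Γ 1 := by rw [hval, h1]
          _ = q * ∫ v in Ioo (0:ℝ) 1, f v := by rw [hI]
      · -- u a₁ = 0
        calc M α ≤ M a₁ := hMa₁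
          _ = q * Γ 0 := by rw [hval, ← h0]
          _ = 0 := by rw [hΓdef]; simp [intervalIntegral.integral_same]
          _ ≤ q * ∫ v in Ioo (0:ℝ) 1, f v := mul_nonneg hq0 hInn
  have hMαval : M α = |F α| ^ q := by
    rw [hMdef]
    simp only [huα, hΓθ, mul_zero, add_zero]
  rw [← hMαval]
  exact hMα

end TW


/-- Corollary: Nonexistence for all speeds.
If the nonexistence inequality is strict and `h_m = h(0)`, then there is no solution
for any `c ∈ ℝ`. -/
theorem stmt1 (p θ : ℝ) (D H h g : ℝ → ℝ) (S : CombSetup p θ D H h g)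
    (hmain : θ * sInf (h '' Icc 0 1) +
      (pconj p * ∫ v in Ioo (0 : ℝ) 1, D v ^ (pconj p - 1) * g v) ^ (1 / pconj p) < H θ)
    (hmin : sInf (h '' Icc 0 1) = h 0) :
    ∀ c : ℝ, ∀ u : ℝ → ℝ, ¬ IsTWSol p c D h g u := by
  intro c u T
  set q := pconj p with hqdef
  have hq1 : 1 < q := pconj_gt_one S.hp
  set I := ∫ v in Ioo (0 : ℝ) 1, D v ^ (q - 1) * g v with hIdef
  have hA : 0 ≤ c + h 0 := stepA S T
  have hch : ∀ w ∈ Icc (0:ℝ) 1, 0 ≤ c + h w := by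
    intro w hw
    have hbdd : BddBelow (h '' Icc 0 1) :=
      (isCompact_Icc.image_of_continuousOn S.hh).bddBelow
    have h1 : sInf (h '' Icc 0 1) ≤ h w := csInf_le hbdd (mem_image_of_mem h hw)
    rw [hmin] at h1
    linarith
  obtain ⟨α, huα, hFα, hcθ⟩ := crossing S T S.hθ0 le_rfl
  have hC := stepC S T hch huα
  rw [hFα] at hC
  have habs : |-(c * θ + H θ)| = c * θ + H θ := by
    rw [abs_neg, abs_of_nonneg hcθ]
  rw [habs] at hC
  -- hC : (c * θ + H θ) ^ q ≤ q * I
  have hqInn : 0 ≤ q * I := le_trans (Real.rpow_nonneg hcθ q) hC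
  have h1 : ((c * θ + H θ) ^ q) ^ (1/q) ≤ (q * I) ^ (1/q) := by
    rw [one_div]
    exact Real.rpow_le_rpow (Real.rpow_nonneg hcθ q) hC (by positivity)
  rw [one_div, Real.rpow_rpow_inv hcθ (by linarith : q ≠ 0)] at h1
  -- h1 : c * θ + H θ ≤ (q * I) ^ q⁻¹
  have h2 : -c ≤ sInf (h '' Icc 0 1) := by rw [hmin]; linarith
  have h3 : -c * θ ≤ θ * sInf (h '' Icc 0 1) := by
    have := mul_le_mul_of_nonneg_right h2 S.hθ0.le
    linarith [this]
  rw [one_div] at hmain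
  linarith
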